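/- For a Hull–White process, the correlation function t ↦ corr(q_i(t), q_j(t)) = 2ρ(√(κ_iκ_j)/(κ_i+κ_j))(1 − e^{−(κ_i+κ_j)t})/√((1−e^{−2κ_i t})(1−e^{−2κ_j t})) is bounded above by ρ, with equality if and only if κ_i = κ_j (for t > 0, ρ > 0). -/

import Mathlib

-- sinh u < u * cosh u for u > 0
lemma aux_sinh_lt (u : ℝ) (hu : 0 < u) : Real.sinh u < u * Real.cosh u := by
  have h : StrictMonoOn (fun v : ℝ => v * Real.cosh v - Real.sinh v) (Set.Ici 0) := by
    apply strictMonoOn_of_deriv_pos (convex_Ici 0)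
    · fun_prop
    · intro v hv
      rw [interior_Ici, Set.mem_Ioi] at hv
      have : HasDerivAt (fun v : ℝ => v * Real.cosh v - Real.sinh v) (v * Real.sinh v) v := by
        have h1 := (hasDerivAt_id v).mul (Real.hasDerivAt_cosh v)
        have h2 := (h1.sub (Real.hasDerivAt_sinh v))
        exact h2.congr_deriv (by simp only [id]; ring)
      rw [this.deriv]
      exact mul_pos hv (Real.sinh_pos_iff.mpr hv)
  have := h (Set.self_mem_Ici) (Set.mem_Ici.mpr hu.le) hu
  simpa using this

-- b * sinh a < a * sinh b for 0 < a < b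
lemma aux_mono (a b : ℝ) (ha : 0 < a) (hab : a < b) : b * Real.sinh a < a * Real.sinh b := by
  have hb : 0 < b := ha.trans hab
  have h : StrictMonoOn (fun v : ℝ => Real.sinh v / v) (Set.Ioi 0) := by
    apply strictMonoOn_of_deriv_pos (convex_Ioi 0)
    · exact Real.continuous_sinh.continuousOn.div continuousOn_id (fun v hv => ne_of_gt hv)
    · intro v hv
      rw [interior_Ioi, Set.mem_Ioi] at hv
      have hd : HasDerivAt (fun v : ℝ => Real.sinh v / v) ((Real.cosh v * v - Real.sinh v * 1) / v ^ 2) v :=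
        (Real.hasDerivAt_sinh v).div (hasDerivAt_id v) (ne_of_gt hv)
      rw [hd.deriv]
      apply div_pos _ (by positivity)
      nlinarith [aux_sinh_lt v hv]
  have := h (Set.mem_Ioi.mpr ha) (Set.mem_Ioi.mpr hb) hab
  rw [div_lt_div_iff₀ ha hb] at this
  linarith

-- key strict inequality for 0 < x < y
lemma aux_key_lt (x y : ℝ) (hx : 0 < x) (hxy : x < y) :
    4*x*y*(1 - Real.exp (-(x+y)))^2 < (x+y)^2*((1 - Real.exp (-2*x))*(1 - Real.exp (-2*y))) := by
  have hy : 0 < y := hx.trans hxy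
  set p := Real.exp (-(x/2)) with hpdef
  set q := Real.exp (-(y/2)) with hqdef
  have hp : 0 < p := Real.exp_pos _
  have hq : 0 < q := Real.exp_pos _
  have hqp : q < p := Real.exp_lt_exp.mpr (by linarith)
  have e1 : Real.exp ((y-x)/2) = p/q := by
    rw [show (y-x)/2 = (-(x/2)) - (-(y/2)) by ring, Real.exp_sub]
  have e2 : Real.exp ((x-y)/2) = q/p := by
    rw [show (x-y)/2 = (-(y/2)) - (-(x/2)) by ring, Real.exp_sub]
  have e3 : Real.exp ((x+y)/2) = (p*q)⁻¹ := by
    rw [show (x+y)/2 = -((-(x/2)) + (-(y/2))) by ring, Real.exp_neg, Real.exp_add]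
  have e4 : Real.exp (-((x+y)/2)) = p*q := by
    rw [show -((x+y)/2) = (-(x/2)) + (-(y/2)) by ring, Real.exp_add]
  have hm := aux_mono ((y-x)/2) ((x+y)/2) (by linarith) (by linarith)
  rw [Real.sinh_eq, Real.sinh_eq, show -((y-x)/2) = (x-y)/2 by ring, e1, e2, e3, e4] at hm
  have hM : (x+y)*(p^2-q^2) < (y-x)*(1-p^2*q^2) := by
    rw [show (x + y) / 2 * ((p / q - q / p) / 2) = ((x+y)*(p^2-q^2))/(4*(p*q)) by
          field_simp; ring,
        show (y - x) / 2 * (((p * q)⁻¹ - p * q) / 2) = ((y-x)*(1-p^2*q^2))/(4*(p*q)) by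
          field_simp; ring,
        div_lt_div_iff_of_pos_right (by positivity : (0:ℝ) < 4*(p*q))] at hm
    exact hm
  have hSq : ((x+y)*(p^2-q^2))^2 < ((y-x)*(1-p^2*q^2))^2 := by
    apply pow_lt_pow_left₀ hM _ (by norm_num)
    apply mul_nonneg (by linarith)
    nlinarith
  have e5 : Real.exp (-(x+y)) = (p*q)^2 := by
    rw [show -(x+y) = ((2:ℕ):ℝ)*((-(x/2)) + (-(y/2))) by push_cast; ring, Real.exp_nat_mul,
      Real.exp_add]
  have e6 : Real.exp (-2*x) = p^4 := by
    rw [show -2*x = ((4:ℕ):ℝ)*(-(x/2)) by push_cast; ring, Real.exp_nat_mul]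
  have e7 : Real.exp (-2*y) = q^4 := by
    rw [show -2*y = ((4:ℕ):ℝ)*(-(y/2)) by push_cast; ring, Real.exp_nat_mul]
  rw [e5, e6, e7]
  nlinarith [hSq]

lemma aux_key_lt' (x y : ℝ) (hx : 0 < x) (hy : 0 < y) (hne : x ≠ y) :
    4*x*y*(1 - Real.exp (-(x+y)))^2 < (x+y)^2*((1 - Real.exp (-2*x))*(1 - Real.exp (-2*y))) := by
  rcases lt_trichotomy x y with h | h | h
  · exact aux_key_lt x y hx h
  · exact absurd h hne
  · have hk := aux_key_lt y x hy h
    rw [show -(y+x) = -(x+y) by ring] at hk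
    nlinarith [hk]

lemma aux_key_le (x y : ℝ) (hx : 0 < x) (hy : 0 < y) :
    4*x*y*(1 - Real.exp (-(x+y)))^2 ≤ (x+y)^2*((1 - Real.exp (-2*x))*(1 - Real.exp (-2*y))) := by
  rcases eq_or_ne x y with h | h
  · subst h
    rw [show -(x+x) = -2*x by ring]
    apply le_of_eq; ring
  · exact (aux_key_lt' x y hx hy h).le

/-- The Hull–White correlation function
`2 ρ (√(κi κj)/(κi + κj)) (1 - e^{-(κi+κj) t}) / √((1 - e^{-2 κi t})(1 - e^{-2 κj t}))`
is bounded above by `ρ`, with equality if and only if `κi = κj` (for `t > 0`, `ρ ∈ (0,1)`). -/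
theorem stmt_17 (κi κj ρ t : ℝ) (hκi : 0 < κi) (hκj : 0 < κj)
    (hρ0 : 0 < ρ) (hρ1 : ρ < 1) (ht : 0 < t) :
    2 * ρ * (Real.sqrt (κi * κj) / (κi + κj)) * (1 - Real.exp (-(κi + κj) * t))
        / Real.sqrt ((1 - Real.exp (-2 * κi * t)) * (1 - Real.exp (-2 * κj * t)))
      ≤ ρ
    ∧ (2 * ρ * (Real.sqrt (κi * κj) / (κi + κj)) * (1 - Real.exp (-(κi + κj) * t))
          / Real.sqrt ((1 - Real.exp (-2 * κi * t)) * (1 - Real.exp (-2 * κj * t)))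
        = ρ ↔ κi = κj) := by
  set A := 1 - Real.exp (-2 * κi * t) with hAdef
  set B := 1 - Real.exp (-2 * κj * t) with hBdef
  set C := 1 - Real.exp (-(κi + κj) * t) with hCdef
  have hA : 0 < A := by
    rw [hAdef, sub_pos]
    exact Real.exp_lt_one_iff.mpr (by have h1 := mul_pos (mul_pos (show (0:ℝ)<2 by norm_num) hκi) ht; have h2 := mul_pos (mul_pos (show (0:ℝ)<2 by norm_num) hκj) ht; have h3 := mul_pos (add_pos hκi hκj) ht; linarith)
  have hB : 0 < B := by
    rw [hBdef, sub_pos]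
    exact Real.exp_lt_one_iff.mpr (by have h1 := mul_pos (mul_pos (show (0:ℝ)<2 by norm_num) hκi) ht; have h2 := mul_pos (mul_pos (show (0:ℝ)<2 by norm_num) hκj) ht; have h3 := mul_pos (add_pos hκi hκj) ht; linarith)
  have hC : 0 < C := by
    rw [hCdef, sub_pos]
    exact Real.exp_lt_one_iff.mpr (by have h1 := mul_pos (mul_pos (show (0:ℝ)<2 by norm_num) hκi) ht; have h2 := mul_pos (mul_pos (show (0:ℝ)<2 by norm_num) hκj) ht; have h3 := mul_pos (add_pos hκi hκj) ht; linarith)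
  set N := 2 * Real.sqrt (κi * κj) * C with hNdef
  set D := (κi + κj) * Real.sqrt (A * B) with hDdef
  have hN0 : 0 ≤ N := by positivity
  have hD0 : 0 < D := by
    apply mul_pos (by linarith) (Real.sqrt_pos.mpr (mul_pos hA hB))
  have hN2 : N^2 = 4*κi*κj*C^2 := by
    rw [hNdef, mul_pow, mul_pow, Real.sq_sqrt (by positivity)]; ring
  have hD2 : D^2 = (κi+κj)^2*(A*B) := by
    rw [hDdef, mul_pow, Real.sq_sqrt (mul_nonneg hA.le hB.le)]
  -- the squared inequality, from the key lemma with x = κi t, y = κj t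
  have hsq_le : N^2 ≤ D^2 := by
    rw [hN2, hD2]
    have h := aux_key_le (κi*t) (κj*t) (by positivity) (by positivity)
    rw [show -(κi*t+κj*t) = -(κi+κj)*t by ring, show -2*(κi*t) = -2*κi*t by ring,
        show -2*(κj*t) = -2*κj*t by ring] at h
    rw [← hAdef, ← hBdef, ← hCdef] at h
    nlinarith [h, mul_pos ht ht]
  have hsq_lt : κi ≠ κj → N^2 < D^2 := by
    intro hne
    rw [hN2, hD2]
    have h := aux_key_lt' (κi*t) (κj*t) (by positivity) (by positivity)
      (fun hh => hne (mul_right_cancel₀ ht.ne' hh))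
    rw [show -(κi*t+κj*t) = -(κi+κj)*t by ring, show -2*(κi*t) = -2*κi*t by ring,
        show -2*(κj*t) = -2*κj*t by ring] at h
    rw [← hAdef, ← hBdef, ← hCdef] at h
    nlinarith [h, mul_pos ht ht]
  have hsq_eq : κi = κj → N = D := by
    intro h
    subst h
    have hAB : B = A := by rw [hAdef, hBdef]
    have h1 : Real.sqrt (A * B) = A := by rw [hAB, Real.sqrt_mul_self hA.le]
    have h2 : Real.sqrt (κi * κi) = κi := Real.sqrt_mul_self hκi.le
    rw [hNdef, hDdef, h1, h2, hCdef, hAdef, show -(κi+κi)*t = -2*κi*t by ring]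
    ring
  have hND : N ≤ D := by
    nlinarith [hsq_le, hN0, hD0]
  have hiff : N = D ↔ κi = κj := by
    constructor
    · intro h
      by_contra hne
      exact absurd (by rw [h]) (ne_of_lt (hsq_lt hne))
    · exact hsq_eq
  have hFeq : 2 * ρ * (Real.sqrt (κi * κj) / (κi + κj)) * C / Real.sqrt (A * B)
      = ρ * N / D := by
    have hs : Real.sqrt (A * B) ≠ 0 := (Real.sqrt_pos.mpr (mul_pos hA hB)).ne'
    have hk : κi + κj ≠ 0 := by positivity
    rw [hNdef, hDdef]
    field_simp
  rw [hFeq]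
  constructor
  · rw [div_le_iff₀ hD0]
    exact mul_le_mul_of_nonneg_left hND hρ0.le
  · rw [div_eq_iff hD0.ne']
    constructor
    · intro h
      apply hiff.mp
      exact mul_left_cancel₀ hρ0.ne' (by linarith [h])
    · intro h
      rw [hiff.mpr h]
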